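/- arXiv:1608.05498 — 11 statements merged into one kernel-verified Lean document; each statement's English description precedes it below -/
import Mathlib

section
/- Let X be an integrable, non-constant real random variable and τ ∈ (0,1). Then there exists a unique real number x = e_τ(X) solving τ·E[(X - x)·1{X > x}] = (1-τ)·E[(x - X)·1{X ≤ x}]. -/
open MeasureTheory

theorem expectile_exists_unique
    {Ω : Type*} [MeasurableSpace Ω] (μ : Measure Ω) [IsProbabilityMeasure μ]
    (X : Ω → ℝ) (hInt : Integrable X μ)
    (hNC : ¬ ∃ c : ℝ, ∀ᵐ ω ∂μ, X ω = c)
    (τ : ℝ) (hτ : τ ∈ Set.Ioo (0:ℝ) 1) :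
    ∃! x : ℝ,
      τ * ∫ ω, (X ω - x) * (if x < X ω then (1:ℝ) else 0) ∂μ
        = (1 - τ) * ∫ ω, (x - X ω) * (if X ω ≤ x then (1:ℝ) else 0) ∂μ := by
  obtain ⟨hτ0, hτ1⟩ := hτ
  have hτ1' : (0:ℝ) < 1 - τ := by linarith
  have hpos : ∀ (x : ℝ) (ω : Ω), (X ω - x) * (if x < X ω then (1:ℝ) else 0)
      = max (X ω - x) 0 := by
    intro x ω
    rcases le_or_gt (X ω) x with hxl | hxl
    · rw [if_neg (not_lt.2 hxl), max_eq_right (by linarith), mul_zero]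
    · rw [if_pos hxl, max_eq_left (by linarith), mul_one]
  have hneg : ∀ (x : ℝ) (ω : Ω), (x - X ω) * (if X ω ≤ x then (1:ℝ) else 0)
      = max (x - X ω) 0 := by
    intro x ω
    rcases le_or_gt (X ω) x with hxl | hxl
    · rw [if_pos hxl, max_eq_left (by linarith), mul_one]
    · rw [if_neg (not_le.2 hxl), max_eq_right (by linarith), mul_zero]
  set g : ℝ → ℝ := fun x => ∫ ω, max (X ω - x) 0 ∂μ with hgdef
  set h : ℝ → ℝ := fun x => ∫ ω, max (x - X ω) 0 ∂μ with hhdef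
  have hIg : ∀ x : ℝ, Integrable (fun ω => max (X ω - x) 0) μ :=
    fun x => (hInt.sub (integrable_const x)).pos_part
  have hIh : ∀ x : ℝ, Integrable (fun ω => max (x - X ω) 0) μ :=
    fun x => ((integrable_const x).sub hInt).pos_part
  set F : ℝ → ℝ := fun x => τ * g x - (1 - τ) * h x with hFdef
  have key : ∀ x y : ℝ, x ≤ y →
      0 ≤ g x - g y ∧ 0 ≤ h y - h x ∧ (g x - g y) + (h y - h x) = y - x := by
    intro x y hxy
    have hA : g y ≤ g x := by
      apply integral_mono (hIg y) (hIg x)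
      intro ω
      exact max_le_max (by linarith) le_rfl
    have hB : h x ≤ h y := by
      apply integral_mono (hIh x) (hIh y)
      intro ω
      exact max_le_max (by linarith) le_rfl
    have hsum : g x + h y = g y + h x + (y - x) := by
      have h1 : ∫ ω, (max (X ω - x) 0 + max (y - X ω) 0) ∂μ = g x + h y :=
        integral_add (hIg x) (hIh y)
      have hint1 : Integrable (fun ω => max (X ω - y) 0 + max (x - X ω) 0) μ :=
        (hIg y).add (hIh x)
      have h2 : ∫ ω, (max (X ω - y) 0 + max (x - X ω) 0 + (y - x)) ∂μ
          = g y + h x + (y - x) := by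
        rw [integral_add hint1 (integrable_const _),
          integral_add (hIg y) (hIh x), integral_const, probReal_univ,
          one_smul]
      have h3 : (fun ω => max (X ω - x) 0 + max (y - X ω) 0)
          = fun ω => max (X ω - y) 0 + max (x - X ω) 0 + (y - x) := by
        funext ω
        rcases le_total (X ω) x with h1' | h1' <;> rcases le_total (X ω) y with h2' | h2'
        · rw [max_eq_right (by linarith), max_eq_left (by linarith),
            max_eq_right (by linarith), max_eq_left (by linarith)]; ring
        · rw [max_eq_right (by linarith), max_eq_right (by linarith),
            max_eq_left (by linarith), max_eq_left (by linarith)]; ring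
        · rw [max_eq_left (by linarith), max_eq_left (by linarith),
            max_eq_right (by linarith), max_eq_right (by linarith)]; ring
        · rw [max_eq_left (by linarith), max_eq_right (by linarith),
            max_eq_left (by linarith), max_eq_right (by linarith)]; ring
      rw [← h1, ← h2, h3]
    exact ⟨by linarith, by linarith, by linarith⟩
  set c : ℝ := min τ (1 - τ) with hcdef
  have hc : 0 < c := lt_min hτ0 hτ1'
  have mono : ∀ x y : ℝ, x ≤ y → c * (y - x) ≤ F x - F y ∧ F x - F y ≤ y - x := by
    intro x y hxy
    obtain ⟨hA, hB, hAB⟩ := key x y hxy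
    have hFxy : F x - F y = τ * (g x - g y) + (1 - τ) * (h y - h x) := by
      simp only [hFdef]; ring
    have hcτ : c ≤ τ := min_le_left _ _
    have hcτ' : c ≤ 1 - τ := min_le_right _ _
    constructor
    · nlinarith
    · nlinarith
  have hFcont : Continuous F := by
    have : LipschitzWith 1 F := by
      apply LipschitzWith.of_dist_le_mul
      intro x y
      rw [NNReal.coe_one, one_mul, Real.dist_eq, Real.dist_eq]
      rcases le_total x y with hxy | hxy
      · obtain ⟨h1, h2⟩ := mono x y hxy
        have h0 : 0 ≤ F x - F y := le_trans (by nlinarith) h1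
        rw [abs_of_nonneg h0, abs_of_nonpos (by linarith)]
        linarith
      · obtain ⟨h1, h2⟩ := mono y x hxy
        have h0 : 0 ≤ F y - F x := le_trans (by nlinarith) h1
        rw [abs_of_nonpos (by linarith), abs_of_nonneg (by linarith)]
        linarith
    exact this.continuous
  -- find a root of F via IVT
  have hM : 0 < |F 0| + 1 := by positivity
  have hMc : 0 < (|F 0| + 1) / c := div_pos hM hc
  have hcb : c * ((|F 0| + 1) / c) = |F 0| + 1 := by field_simp
  have hab : -((|F 0| + 1) / c) ≤ (|F 0| + 1) / c := by linarith
  have hFa : 0 < F (-((|F 0| + 1) / c)) := by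
    obtain ⟨h1, -⟩ := mono (-((|F 0| + 1) / c)) 0 (by linarith)
    have h2 : c * (0 - -((|F 0| + 1) / c)) = |F 0| + 1 := by
      rw [zero_sub, neg_neg]; exact hcb
    rw [h2] at h1
    have hx1 := neg_abs_le (F 0)
    clear_value F c g h
    linarith
  have hFb : F ((|F 0| + 1) / c) < 0 := by
    obtain ⟨h1, -⟩ := mono 0 ((|F 0| + 1) / c) (by linarith)
    have h2 : c * ((|F 0| + 1) / c - 0) = |F 0| + 1 := by
      rw [sub_zero]; exact hcb
    rw [h2] at h1
    have hx1 := le_abs_self (F 0)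
    clear_value F c g h
    linarith
  have hmem : (0:ℝ) ∈ Set.Icc (F ((|F 0| + 1) / c)) (F (-((|F 0| + 1) / c))) :=
    ⟨le_of_lt hFb, le_of_lt hFa⟩
  obtain ⟨x, -, hx⟩ := intermediate_value_Icc' hab hFcont.continuousOn hmem
  have heq : ∀ z : ℝ,
      (τ * ∫ ω, (X ω - z) * (if z < X ω then (1:ℝ) else 0) ∂μ
        = (1 - τ) * ∫ ω, (z - X ω) * (if X ω ≤ z then (1:ℝ) else 0) ∂μ) ↔ F z = 0 := by
    intro z
    simp only [hpos, hneg]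
    have : F z = τ * g z - (1 - τ) * h z := rfl
    rw [this]
    constructor
    · intro h'
      simp only [hgdef, hhdef]
      linarith [h']
    · intro h'
      have : τ * g z = (1 - τ) * h z := by linarith
      simpa only [hgdef, hhdef] using this
  refine ⟨x, (heq x).2 hx, ?_⟩
  intro y hy
  have hFy : F y = 0 := (heq y).1 hy
  rcases lt_trichotomy y x with hlt | heq' | hlt
  · obtain ⟨h1, _⟩ := mono y x (le_of_lt hlt)
    nlinarith
  · exact heq'
  · obtain ⟨h1, _⟩ := mono x y (le_of_lt hlt)
    nlinarith
end

section
/- Let X be a square-integrable real random variable and τ ∈ (0,1). Define the scoring function S(r,x) = -1{x > r}·(1-2τ)·(x-r)² + (1-τ)·r·(r - 2x). Then for every real r, E[S(e_τ(X), X)] ≤ E[S(r, X)], with strict inequality whenever r ≠ e_τ(X). -/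
open MeasureTheory


private lemma expectile_aux (τ r e x : ℝ) (hτ0 : 0 < τ) (hτ1 : τ < 1) :
    min τ (1 - τ) * (r - e)^2 ≤
      (-(if r < x then (1:ℝ) else 0) * (1 - 2*τ) * (x - r)^2 + (1 - τ) * r * (r - 2*x))
      - (-(if e < x then (1:ℝ) else 0) * (1 - 2*τ) * (x - e)^2 + (1 - τ) * e * (e - 2*x))
      + 2*(r-e) * ((x - e) * (τ + (1 - 2*τ) * (if x ≤ e then (1:ℝ) else 0))) := by
  rcases le_or_gt x r with h1 | h1 <;> rcases le_or_gt x e with h2 | h2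
  · rw [if_neg (not_lt.mpr h1), if_neg (not_lt.mpr h2), if_pos h2]
    nlinarith [mul_nonneg (by simp [min_le_right] : (0:ℝ) ≤ 1 - τ - min τ (1-τ))
      (sq_nonneg (r - e))]
  · rw [if_neg (not_lt.mpr h1), if_pos h2, if_neg (not_le.mpr h2)]
    rcases min_cases τ (1 - τ) with ⟨hc, hcc⟩ | ⟨hc, hcc⟩ <;> rw [hc]
    · nlinarith [mul_nonneg (by linarith : (0:ℝ) ≤ 1 - 2*τ) (sq_nonneg (x - r))]
    · nlinarith [mul_nonneg (mul_nonneg (by linarith : (0:ℝ) ≤ 2*τ - 1)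
        (by linarith : (0:ℝ) ≤ x - e)) (by linarith : (0:ℝ) ≤ 2*r - x - e)]
  · rw [if_pos h1, if_neg (not_lt.mpr h2), if_pos h2]
    rcases min_cases τ (1 - τ) with ⟨hc, hcc⟩ | ⟨hc, hcc⟩ <;> rw [hc]
    · nlinarith [mul_nonneg (mul_nonneg (by linarith : (0:ℝ) ≤ 1 - 2*τ)
        (by linarith : (0:ℝ) ≤ e - x)) (by linarith : (0:ℝ) ≤ x + e - 2*r)]
    · nlinarith [mul_nonneg (by linarith : (0:ℝ) ≤ 2*τ - 1) (sq_nonneg (x - r))]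
  · rw [if_pos h1, if_pos h2, if_neg (not_le.mpr h2)]
    nlinarith [mul_nonneg (by simp [min_le_left] : (0:ℝ) ≤ τ - min τ (1-τ))
      (sq_nonneg (r - e))]

theorem expectile_quadratic_score_strictly_consistent
    {Ω : Type*} [MeasurableSpace Ω] (μ : Measure Ω) [IsProbabilityMeasure μ]
    (X : Ω → ℝ) (hX : Measurable X)
    (hL2 : Integrable (fun ω => (X ω) ^ 2) μ)
    (τ : ℝ) (hτ : τ ∈ Set.Ioo (0:ℝ) 1)
    (e : ℝ)
    (he : τ * ∫ ω, (X ω - e) * (if e < X ω then (1:ℝ) else 0) ∂μ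
        = (1 - τ) * ∫ ω, (e - X ω) * (if X ω ≤ e then (1:ℝ) else 0) ∂μ)
    (S : ℝ → ℝ → ℝ)
    (hS : ∀ r x, S r x = -(if r < x then (1:ℝ) else 0) * (1 - 2*τ) * (x - r)^2
        + (1 - τ) * r * (r - 2*x)) :
    ∀ r : ℝ, (∫ ω, S e (X ω) ∂μ) ≤ (∫ ω, S r (X ω) ∂μ)
      ∧ (r ≠ e → (∫ ω, S e (X ω) ∂μ) < (∫ ω, S r (X ω) ∂μ)) := by
  classical
  obtain ⟨hτ0, hτ1⟩ := hτ
  have eqI : ∀ {g h : Ω → ℝ}, (∀ ω, g ω = h ω) → Integrable g μ → Integrable h μ :=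
    fun hgh hg => (funext hgh) ▸ hg
  -- X is integrable
  have hXint : Integrable X μ := by
    refine ((hL2.add (integrable_const 1)).div_const 2).mono' hX.aestronglyMeasurable ?_
    filter_upwards with ω
    rw [Real.norm_eq_abs]
    simp only [Pi.add_apply]
    nlinarith [sq_nonneg (|X ω| - 1), sq_abs (X ω)]
  -- quadratic functions of X are integrable
  have intQuad : ∀ a b c : ℝ, Integrable (fun ω => a * (X ω)^2 + b * (X ω) + c) μ := by
    intro a b c
    simpa [add_assoc, Pi.add_def] using (hL2.const_mul a).add ((hXint.const_mul b).add (integrable_const c))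
  -- indicator times integrable function is integrable
  have hind1 : ∀ (t : ℝ) (g : Ω → ℝ), Integrable g μ →
      Integrable (fun ω => (if t < X ω then (1:ℝ) else 0) * g ω) μ := by
    intro t g hg
    have hm : Measurable (fun ω => if t < X ω then (1:ℝ) else 0) :=
      Measurable.ite (measurableSet_lt measurable_const hX) measurable_const measurable_const
    refine hg.abs.mono' (hm.aestronglyMeasurable.mul hg.aestronglyMeasurable) ?_
    filter_upwards with ω
    rw [Real.norm_eq_abs, abs_mul]
    split_ifs <;> simp [abs_nonneg]
  have hind2 : ∀ (t : ℝ) (g : Ω → ℝ), Integrable g μ →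
      Integrable (fun ω => (if X ω ≤ t then (1:ℝ) else 0) * g ω) μ := by
    intro t g hg
    have hm : Measurable (fun ω => if X ω ≤ t then (1:ℝ) else 0) :=
      Measurable.ite (measurableSet_le hX measurable_const) measurable_const measurable_const
    refine hg.abs.mono' (hm.aestronglyMeasurable.mul hg.aestronglyMeasurable) ?_
    filter_upwards with ω
    rw [Real.norm_eq_abs, abs_mul]
    split_ifs <;> simp [abs_nonneg]
  -- S r (X ·) integrable
  have hSint : ∀ r : ℝ, Integrable (fun ω => S r (X ω)) μ := by
    intro r
    have h1 := hind1 r _ (intQuad (1 - 2*τ) (-(2*(1-2*τ))*r) ((1-2*τ)*r^2))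
    have h2 := intQuad 0 (-(2*(1-τ)*r)) ((1-τ)*r^2)
    refine eqI (g := fun ω =>
      (-1 : ℝ) * ((if r < X ω then (1:ℝ) else 0) *
        ((1 - 2*τ) * (X ω)^2 + (-(2*(1-2*τ))*r) * X ω + (1-2*τ)*r^2))
      + (0 * (X ω)^2 + (-(2*(1-τ)*r)) * X ω + (1-τ)*r^2)) ?_ ((h1.const_mul (-1)).add h2)
    intro ω
    rw [hS]
    ring
  -- the weight function W with ∫ W = 0
  set W : Ω → ℝ := fun ω => (X ω - e) * (τ + (1 - 2*τ) * (if X ω ≤ e then (1:ℝ) else 0)) with hWdef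
  have hf1int : Integrable (fun ω => (X ω - e) * (if e < X ω then (1:ℝ) else 0)) μ := by
    refine eqI (g := fun ω => (if e < X ω then (1:ℝ) else 0) * (0 * (X ω)^2 + 1 * X ω + (-e)))
      ?_ (hind1 e _ (intQuad 0 1 (-e)))
    intro ω; ring
  have hf2int : Integrable (fun ω => (e - X ω) * (if X ω ≤ e then (1:ℝ) else 0)) μ := by
    refine eqI (g := fun ω => (if X ω ≤ e then (1:ℝ) else 0) * (0 * (X ω)^2 + (-1) * X ω + e))
      ?_ (hind2 e _ (intQuad 0 (-1) e))
    intro ω; ring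
  have hWeq : ∀ ω, W ω =
      τ * ((X ω - e) * (if e < X ω then (1:ℝ) else 0))
      - (1 - τ) * ((e - X ω) * (if X ω ≤ e then (1:ℝ) else 0)) := by
    intro ω
    rcases le_or_gt (X ω) e with h | h
    · simp only [hWdef, if_pos h, if_neg (not_lt.mpr h)]; ring
    · simp only [hWdef, if_neg (not_le.mpr h), if_pos h]; ring
  have hWint : Integrable W μ :=
    eqI (fun ω => (hWeq ω).symm) ((hf1int.const_mul τ).sub (hf2int.const_mul (1-τ)))
  have hWzero : (∫ ω, W ω ∂μ) = 0 := by
    rw [integral_congr_ae (Filter.Eventually.of_forall hWeq),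
      integral_sub (hf1int.const_mul τ) (hf2int.const_mul (1-τ)),
      integral_const_mul, integral_const_mul, he]
    ring
  -- main estimate for each r
  intro r
  set c : ℝ := min τ (1 - τ) with hcdef
  have hcτ : c ≤ τ := min_le_left _ _
  have hcτ' : c ≤ 1 - τ := min_le_right _ _
  have hcpos : 0 < c := lt_min hτ0 (by linarith)
  set R : Ω → ℝ := fun ω => S r (X ω) - S e (X ω) + 2*(r-e) * W ω with hRdef
  have hRint : Integrable R μ := ((hSint r).sub (hSint e)).add (hWint.const_mul (2*(r-e)))
  have hRpt : ∀ ω, c * (r - e)^2 ≤ R ω := by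
    intro ω
    have h := expectile_aux τ r e (X ω) hτ0 hτ1
    simp only [hRdef, hWdef]
    rw [hS, hS]
    exact h
  have key : (∫ ω, S e (X ω) ∂μ) + c * (r - e)^2 ≤ ∫ ω, S r (X ω) ∂μ := by
    have h1 : (∫ ω, R ω ∂μ)
        = (∫ ω, S r (X ω) ∂μ) - (∫ ω, S e (X ω) ∂μ) + 2*(r-e) * (∫ ω, W ω ∂μ) := by
      have hsub : Integrable (fun ω => S r (X ω) - S e (X ω)) μ := (hSint r).sub (hSint e)
      have hmul : Integrable (fun ω => 2*(r-e) * W ω) μ := hWint.const_mul _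
      simp only [hRdef]
      rw [integral_add hsub hmul, integral_sub (hSint r) (hSint e), integral_const_mul]
    have h2 : c * (r - e)^2 ≤ ∫ ω, R ω ∂μ := by
      have := integral_mono (integrable_const (c * (r - e)^2)) hRint hRpt
      simpa using this
    rw [hWzero] at h1
    linarith
  have hnn : 0 ≤ c * (r - e)^2 := mul_nonneg hcpos.le (sq_nonneg _)
  refine ⟨by linarith, fun hne => ?_⟩
  have h0 : r - e ≠ 0 := sub_ne_zero.mpr hne
  have hsq : 0 < (r - e)^2 := by rcases h0.lt_or_gt with h | h <;> nlinarith
  nlinarith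
end

section
/- Let X be an integrable real random variable with continuous and strictly increasing distribution function F, let α ∈ (0,1), and set q = F⁻¹(α). Define the pinball scoring function S(r,x) = (1 - α - 1{x > r})·r + 1{x > r}·x. Then E[S(q, X)] < E[S(r, X)] for all r ≠ q. -/
open MeasureTheory

theorem pinball_strictly_consistent_for_quantile
    {Ω : Type*} [MeasurableSpace Ω] (μ : Measure Ω) [IsProbabilityMeasure μ]
    (X : Ω → ℝ) (hX : Measurable X) (hInt : Integrable X μ)
    (F : ℝ → ℝ) (hF : ∀ x, F x = (μ {ω | X ω ≤ x}).toReal)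
    (hFcont : Continuous F) (hFmono : StrictMono F)
    (α : ℝ) (hα : α ∈ Set.Ioo (0:ℝ) 1)
    (q : ℝ) (hq : F q = α)
    (S : ℝ → ℝ → ℝ)
    (hS : ∀ r x, S r x = (1 - α - (if r < x then (1:ℝ) else 0)) * r
        + (if r < x then (1:ℝ) else 0) * x) :
    ∀ r : ℝ, r ≠ q → (∫ ω, S q (X ω) ∂μ) < (∫ ω, S r (X ω) ∂μ) := by
  obtain ⟨hα0, hα1⟩ := hα
  have hSf : ∀ r x, S r x = (1 - α) * r + max (x - r) 0 := by
    intro r x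
    rw [hS]
    rcases lt_or_ge r x with h | h
    · rw [if_pos h, max_eq_left (by linarith)]; ring
    · rw [if_neg (not_lt.mpr h), max_eq_right (by linarith)]; ring
  have hint : ∀ r : ℝ, Integrable (fun ω => S r (X ω)) μ := fun r =>
    ((integrable_const ((1 - α) * r)).add ((hInt.sub (integrable_const r)).pos_part)).congr
      (Filter.Eventually.of_forall fun ω => (hSf r (X ω)).symm)
  have hA : ∀ t : ℝ, MeasurableSet {ω | X ω ≤ t} := fun t => hX measurableSet_Iic
  have hAgt : ∀ t : ℝ, MeasurableSet {ω | t < X ω} := by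
    intro t
    have h : {ω | t < X ω} = {ω | X ω ≤ t}ᶜ := by ext ω; simp [not_le]
    rw [h]; exact (hA t).compl
  have hle : ∀ t : ℝ, (μ {ω | X ω ≤ t}).toReal = F t := fun t => (hF t).symm
  have hgt : ∀ t : ℝ, (μ {ω | t < X ω}).toReal = 1 - F t := by
    intro t
    have hc : {ω | t < X ω} = {ω | X ω ≤ t}ᶜ := by ext ω; simp [not_le]
    rw [hc, measure_compl (hA t) (measure_ne_top μ _), measure_univ,
      ENNReal.toReal_sub_of_le prob_le_one ENNReal.one_ne_top, ENNReal.toReal_one, hle]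
  have hdiffset : ∀ s t : ℝ, {ω | s < X ω ∧ X ω ≤ t} = {ω | X ω ≤ t} \ {ω | X ω ≤ s} := by
    intro s t; ext ω; simp only [Set.mem_diff, Set.mem_setOf_eq, not_le]; tauto
  have hAd : ∀ s t : ℝ, MeasurableSet {ω | s < X ω ∧ X ω ≤ t} := by
    intro s t; rw [hdiffset]; exact (hA t).diff (hA s)
  have hdiff : ∀ s t : ℝ, s ≤ t → (μ {ω | s < X ω ∧ X ω ≤ t}).toReal = F t - F s := by
    intro s t hst
    have hsub : {ω | X ω ≤ s} ⊆ {ω | X ω ≤ t} := fun ω h => le_trans h hst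
    rw [hdiffset, measure_diff hsub (hA s).nullMeasurableSet (measure_ne_top μ _),
      ENNReal.toReal_sub_of_le (measure_mono hsub) (measure_ne_top μ _), hle, hle]
  intro r hr
  rcases hr.lt_or_gt with hlt | hlt
  · -- r < q
    set m := (r + q) / 2 with hm
    have hrm : r < m := by rw [hm]; linarith
    have hmq : m < q := by rw [hm]; linarith
    have hFm : F m < α := hq ▸ hFmono hmq
    set g : Ω → ℝ := fun ω => -((1 - α) * (q - r)) +
      (Set.indicator {ω | m < X ω ∧ X ω ≤ q} (fun _ => (m - r)) ω +
       Set.indicator {ω | q < X ω} (fun _ => (q - r)) ω) with hg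
    have hgint : Integrable g μ :=
      (integrable_const _).add (((integrable_const _).indicator (hAd m q)).add
        ((integrable_const _).indicator (hAgt q)))
    have hbound : ∀ ω, g ω ≤ S r (X ω) - S q (X ω) := by
      intro ω
      rw [hg, hSf r (X ω), hSf q (X ω)]
      simp only [Set.indicator_apply, Set.mem_setOf_eq]
      rcases le_or_gt (X ω) m with h1 | h1
      · rw [if_neg (by rintro ⟨h2, _⟩; linarith), if_neg (not_lt.mpr (by linarith)),
          max_eq_right (show X ω - q ≤ 0 by linarith)]
        have := le_max_right (X ω - r) (0:ℝ)
        linarith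
      · rcases le_or_gt (X ω) q with h2 | h2
        · rw [if_pos ⟨h1, h2⟩, if_neg (not_lt.mpr h2),
            max_eq_right (show X ω - q ≤ 0 by linarith),
            max_eq_left (show (0:ℝ) ≤ X ω - r by linarith)]
          linarith
        · rw [if_neg (by rintro ⟨_, h3⟩; linarith), if_pos h2,
            max_eq_left (show (0:ℝ) ≤ X ω - q by linarith),
            max_eq_left (show (0:ℝ) ≤ X ω - r by linarith)]
          linarith
    have hgi : ∫ ω, g ω ∂μ = (m - r) * (α - F m) := by
      have hi1 : Integrable (fun ω => Set.indicator {ω | m < X ω ∧ X ω ≤ q}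
          (fun _ => (m - r)) ω) μ := (integrable_const _).indicator (hAd m q)
      have hi2 : Integrable (fun ω => Set.indicator {ω | q < X ω}
          (fun _ => (q - r)) ω) μ := (integrable_const _).indicator (hAgt q)
      have hi12 : Integrable (fun ω => Set.indicator {ω | m < X ω ∧ X ω ≤ q}
          (fun _ => (m - r)) ω + Set.indicator {ω | q < X ω} (fun _ => (q - r)) ω) μ :=
        hi1.add hi2
      simp only [hg]
      rw [integral_add (integrable_const _) hi12, integral_add hi1 hi2,
        integral_const, integral_indicator_const _ (hAd m q),
        integral_indicator_const _ (hAgt q), measureReal_def, measureReal_def, measureReal_def,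
        hdiff m q hmq.le, hgt q, hq]
      simp only [measure_univ, ENNReal.toReal_one, smul_eq_mul, one_mul]
      ring
    have h1 : ∫ ω, g ω ∂μ ≤ ∫ ω, (S r (X ω) - S q (X ω)) ∂μ :=
      integral_mono hgint ((hint r).sub (hint q)) hbound
    rw [integral_sub (hint r) (hint q)] at h1
    have hpos : 0 < (m - r) * (α - F m) := mul_pos (by linarith) (by linarith)
    linarith [hgi ▸ h1]
  · -- q < r
    set m := (q + r) / 2 with hm
    have hqm : q < m := by rw [hm]; linarith
    have hmr : m < r := by rw [hm]; linarith
    have hFm : α < F m := hq ▸ hFmono hqm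
    set g : Ω → ℝ := fun ω => (1 - α) * (r - q) +
      (Set.indicator {ω | q < X ω ∧ X ω ≤ m} (fun _ => -(m - q)) ω +
       Set.indicator {ω | m < X ω} (fun _ => -(r - q)) ω) with hg
    have hgint : Integrable g μ :=
      (integrable_const _).add (((integrable_const _).indicator (hAd q m)).add
        ((integrable_const _).indicator (hAgt m)))
    have hbound : ∀ ω, g ω ≤ S r (X ω) - S q (X ω) := by
      intro ω
      rw [hg, hSf r (X ω), hSf q (X ω)]
      simp only [Set.indicator_apply, Set.mem_setOf_eq]
      rcases le_or_gt (X ω) q with h1 | h1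
      · rw [if_neg (by rintro ⟨h2, _⟩; linarith), if_neg (not_lt.mpr (by linarith)),
          max_eq_right (show X ω - q ≤ 0 by linarith),
          max_eq_right (show X ω - r ≤ 0 by linarith)]
        linarith
      · rcases le_or_gt (X ω) m with h2 | h2
        · rw [if_pos ⟨h1, h2⟩, if_neg (not_lt.mpr h2),
            max_eq_left (show (0:ℝ) ≤ X ω - q by linarith),
            max_eq_right (show X ω - r ≤ 0 by linarith)]
          linarith
        · rw [if_neg (by rintro ⟨_, h3⟩; linarith), if_pos h2,
            max_eq_left (show (0:ℝ) ≤ X ω - q by linarith)]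
          rcases le_or_gt (X ω) r with h3 | h3
          · rw [max_eq_right (show X ω - r ≤ 0 by linarith)]; linarith
          · rw [max_eq_left (show (0:ℝ) ≤ X ω - r by linarith)]; linarith
    have hgi : ∫ ω, g ω ∂μ = (r - m) * (F m - α) := by
      have hi1 : Integrable (fun ω => Set.indicator {ω | q < X ω ∧ X ω ≤ m}
          (fun _ => -(m - q)) ω) μ := (integrable_const _).indicator (hAd q m)
      have hi2 : Integrable (fun ω => Set.indicator {ω | m < X ω}
          (fun _ => -(r - q)) ω) μ := (integrable_const _).indicator (hAgt m)
      have hi12 : Integrable (fun ω => Set.indicator {ω | q < X ω ∧ X ω ≤ m}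
          (fun _ => -(m - q)) ω + Set.indicator {ω | m < X ω} (fun _ => -(r - q)) ω) μ :=
        hi1.add hi2
      simp only [hg]
      rw [integral_add (integrable_const _) hi12, integral_add hi1 hi2,
        integral_const, integral_indicator_const _ (hAd q m),
        integral_indicator_const _ (hAgt m), measureReal_def, measureReal_def, measureReal_def,
        hdiff q m hqm.le, hgt m, hq]
      simp only [measure_univ, ENNReal.toReal_one, smul_eq_mul, one_mul]
      ring
    have h1 : ∫ ω, g ω ∂μ ≤ ∫ ω, (S r (X ω) - S q (X ω)) ∂μ :=
      integral_mono hgint ((hint r).sub (hint q)) hbound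
    rw [integral_sub (hint r) (hint q)] at h1
    have hpos : 0 < (r - m) * (F m - α) := mul_pos (by linarith) (by linarith)
    linarith [hgi ▸ h1]
end

section
/- Let X be an integrable real random variable with continuous strictly increasing distribution function F, α ∈ (0,1), q = F⁻¹(α), and let S(r,x) = (1-α-1{x>r})r + 1{x>r}x be the pinball loss. If q < r < r' or r' < r < q, then E[S(q,X)] < E[S(r,X)] < E[S(r',X)]. -/
open MeasureTheory

theorem pinball_order_sensitive
    {Ω : Type*} [MeasurableSpace Ω] (μ : Measure Ω) [IsProbabilityMeasure μ]
    (X : Ω → ℝ) (hX : Measurable X) (hInt : Integrable X μ)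
    (F : ℝ → ℝ) (hF : ∀ x, F x = (μ {ω | X ω ≤ x}).toReal)
    (hFcont : Continuous F) (hFmono : StrictMono F)
    (α : ℝ) (hα : α ∈ Set.Ioo (0:ℝ) 1)
    (q : ℝ) (hq : F q = α)
    (S : ℝ → ℝ → ℝ)
    (hS : ∀ r x, S r x = (1 - α - (if r < x then (1:ℝ) else 0)) * r
        + (if r < x then (1:ℝ) else 0) * x)
    (r r' : ℝ) (h : (q < r ∧ r < r') ∨ (r' < r ∧ r < q)) :
    (∫ ω, S q (X ω) ∂μ) < (∫ ω, S r (X ω) ∂μ)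
      ∧ (∫ ω, S r (X ω) ∂μ) < (∫ ω, S r' (X ω) ∂μ) := by
  obtain ⟨hα0, hα1⟩ := hα
  have hS' : ∀ r x, S r x = (1 - α) * r + max (x - r) 0 := by
    intro r x
    rw [hS]
    by_cases hrx : r < x
    · rw [if_pos hrx, max_eq_left (by linarith)]; ring
    · push_neg at hrx
      rw [if_neg (not_lt.mpr hrx), max_eq_right (by linarith)]; ring
  set I : ℝ → ℝ := fun r => ∫ ω, max (X ω - r) 0 ∂μ with hIdef
  have hIint : ∀ r : ℝ, Integrable (fun ω => max (X ω - r) 0) μ := by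
    intro r
    exact (hInt.sub (integrable_const r)).pos_part
  have hg : ∀ r : ℝ, (∫ ω, S r (X ω) ∂μ) = (1 - α) * r + I r := by
    intro r
    simp only [hS']
    rw [integral_add (integrable_const _) (hIint r), integral_const, measureReal_def, measure_univ]
    simp [hIdef]
  -- probability of tails
  have hgt : ∀ t : ℝ, (μ {ω | t < X ω}).toReal = 1 - F t := by
    intro t
    have hms : MeasurableSet {ω | X ω ≤ t} := hX measurableSet_Iic
    have hcompl : {ω | t < X ω} = {ω | X ω ≤ t}ᶜ := by
      ext ω; simp [not_le]
    rw [hcompl, measure_compl hms (measure_ne_top μ _), measure_univ,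
      ENNReal.toReal_sub_of_le prob_le_one ENNReal.one_ne_top]
    simp [hF t]
  -- key two-sided bound
  have keyI : ∀ a b : ℝ, a < b →
      (b - a) * (1 - F b) ≤ I a - I b ∧ I a - I b ≤ (b - a) * (1 - F a) := by
    intro a b hab
    have hdiff : I a - I b = ∫ ω, (max (X ω - a) 0 - max (X ω - b) 0) ∂μ :=
      (integral_sub (hIint a) (hIint b)).symm
    have hmsb : MeasurableSet {ω | b ≤ X ω} := hX measurableSet_Ici
    have hmsa : MeasurableSet {ω | a < X ω} := hX measurableSet_Ioi
    constructor
    · have hlow : ∀ ω, Set.indicator {ω | b ≤ X ω} (fun _ => b - a) ω ≤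
          max (X ω - a) 0 - max (X ω - b) 0 := by
        intro ω
        by_cases hb : b ≤ X ω
        · simp only [Set.indicator_apply, Set.mem_setOf_eq, if_pos hb]
          rw [max_eq_left (by linarith), max_eq_left (by linarith)]
          linarith
        · simp only [Set.indicator_apply, Set.mem_setOf_eq, if_neg hb]
          push_neg at hb
          have h0 : max (X ω - b) 0 = 0 := max_eq_right (by linarith)
          rw [h0]
          simp [le_max_right]
      have := integral_mono ((integrable_const (b - a)).indicator hmsb)
        ((hIint a).sub (hIint b)) hlow
      rw [integral_indicator_const _ hmsb, measureReal_def] at this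
      simp only [Pi.sub_apply, smul_eq_mul] at this
      have hμb : 1 - F b ≤ (μ {ω | b ≤ X ω}).toReal := by
        rw [← hgt b]
        exact ENNReal.toReal_mono (measure_ne_top μ _)
          (measure_mono (fun ω (hω : b < X ω) => le_of_lt hω))
      rw [hdiff]
      have hba : (0:ℝ) ≤ b - a := by linarith
      have := mul_le_mul_of_nonneg_right hμb hba
      linarith
    · have hup : ∀ ω, max (X ω - a) 0 - max (X ω - b) 0 ≤
          Set.indicator {ω | a < X ω} (fun _ => b - a) ω := by
        intro ω
        by_cases ha : a < X ω
        · simp only [Set.indicator_apply, Set.mem_setOf_eq, if_pos ha]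
          rw [max_eq_left (by linarith)]
          rcases le_or_gt (X ω) b with hb | hb
          · rw [max_eq_right (by linarith)]; linarith
          · rw [max_eq_left (by linarith)]; linarith
        · simp only [Set.indicator_apply, Set.mem_setOf_eq, if_neg ha]
          push_neg at ha
          rw [max_eq_right (by linarith), max_eq_right (by linarith)]
          norm_num
      have := integral_mono ((hIint a).sub (hIint b))
        ((integrable_const (b - a)).indicator hmsa) hup
      rw [integral_indicator_const _ hmsa, measureReal_def, hgt a] at this
      simp only [Pi.sub_apply, smul_eq_mul] at this
      rw [hdiff]
      linarith
  have key : ∀ a b : ℝ, a < b →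
      (b - a) * (F a - α) ≤ (∫ ω, S b (X ω) ∂μ) - (∫ ω, S a (X ω) ∂μ) ∧
      (∫ ω, S b (X ω) ∂μ) - (∫ ω, S a (X ω) ∂μ) ≤ (b - a) * (F b - α) := by
    intro a b hab
    obtain ⟨h1, h2⟩ := keyI a b hab
    rw [hg a, hg b]
    constructor <;> nlinarith [h1, h2]
  have hFle : ∀ a : ℝ, q ≤ a → α ≤ F a := by
    intro a ha; rw [← hq]; exact hFmono.monotone ha
  have hFlt : ∀ a : ℝ, q < a → α < F a := by
    intro a ha; rw [← hq]; exact hFmono ha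
  have hFle' : ∀ a : ℝ, a ≤ q → F a ≤ α := by
    intro a ha; rw [← hq]; exact hFmono.monotone ha
  have hFlt' : ∀ a : ℝ, a < q → F a < α := by
    intro a ha; rw [← hq]; exact hFmono ha
  have inc : ∀ a b : ℝ, q ≤ a → a < b →
      (∫ ω, S a (X ω) ∂μ) < (∫ ω, S b (X ω) ∂μ) := by
    intro a b hqa hab
    have ham : a < (a + b) / 2 := by linarith
    have hmb : (a + b) / 2 < b := by linarith
    obtain ⟨h1, _⟩ := key a ((a + b) / 2) ham
    obtain ⟨h2, _⟩ := key ((a + b) / 2) b hmb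
    have hb1 : (0:ℝ) ≤ ((a + b) / 2 - a) * (F a - α) :=
      mul_nonneg (by linarith) (by have := hFle a hqa; linarith)
    have hb2 : (0:ℝ) < (b - (a + b) / 2) * (F ((a + b) / 2) - α) :=
      mul_pos (by linarith) (by have := hFlt ((a + b) / 2) (lt_of_le_of_lt hqa ham); linarith)
    linarith
  have dec : ∀ a b : ℝ, a < b → b ≤ q →
      (∫ ω, S b (X ω) ∂μ) < (∫ ω, S a (X ω) ∂μ) := by
    intro a b hab hbq
    have ham : a < (a + b) / 2 := by linarith
    have hmb : (a + b) / 2 < b := by linarith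
    obtain ⟨_, h1⟩ := key a ((a + b) / 2) ham
    obtain ⟨_, h2⟩ := key ((a + b) / 2) b hmb
    have hb1 : ((a + b) / 2 - a) * (F ((a + b) / 2) - α) < 0 :=
      mul_neg_of_pos_of_neg (by linarith)
        (by have := hFlt' ((a + b) / 2) (lt_of_lt_of_le hmb hbq); linarith)
    have hb2 : (b - (a + b) / 2) * (F b - α) ≤ 0 :=
      mul_nonpos_of_nonneg_of_nonpos (by linarith)
        (by have := hFle' b hbq; linarith)
    linarith
  rcases h with ⟨h1, h2⟩ | ⟨h1, h2⟩
  · exact ⟨inc q r le_rfl h1, inc r r' (le_of_lt h1) h2⟩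
  · exact ⟨dec r q h2 le_rfl, dec r' r h1 (le_of_lt h2)⟩
end

section
/- Let α ∈ (0,1), b > 0, and suppose G: ℝ → ℝ is strictly increasing. Define S(r,x) = (1 - α - 1{x > r})·G(r) + 1{x > r}·G(x). If S(c·r, c·x) = c^b · S(r,x) for all c > 0 and all r, x ∈ ℝ, then there exist constants c₀ > 0 and c₀' > 0 such that G(x) = c₀·x^b for x ≥ 0 and G(x) = -c₀'·|x|^b for x < 0. -/
theorem var_score_positively_homogeneous_characterization
    (α b : ℝ) (hα : α ∈ Set.Ioo (0:ℝ) 1) (hb : 0 < b)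
    (G : ℝ → ℝ) (hG : StrictMono G)
    (S : ℝ → ℝ → ℝ)
    (hS : ∀ r x, S r x = (1 - α - (if r < x then (1:ℝ) else 0)) * G r
        + (if r < x then (1:ℝ) else 0) * G x)
    (hhom : ∀ c > (0:ℝ), ∀ r x : ℝ, S (c * r) (c * x) = c ^ b * S r x) :
    ∃ c₀ > (0:ℝ), ∃ c₀' > (0:ℝ), ∀ x : ℝ,
      G x = if 0 ≤ x then c₀ * x ^ b else -c₀' * |x| ^ b := by
  obtain ⟨hα0, hα1⟩ := hα
  have h1α : (1:ℝ) - α ≠ 0 := by linarith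
  have hkey : ∀ c > (0:ℝ), ∀ r : ℝ, G (c * r) = c ^ b * G r := by
    intro c hc r
    have h := hhom c hc r r
    rw [hS, hS] at h
    simp only [lt_irrefl, if_false] at h
    have h' : (1 - α) * G (c * r) = (1 - α) * (c ^ b * G r) := by
      rw [show (1 - α) * (c ^ b * G r) = c ^ b * ((1 - α - 0) * G r + 0 * G r) by ring]
      rw [← h]; ring
    exact mul_left_cancel₀ h1α h'
  have h2b : (1:ℝ) < 2 ^ b :=
    (Real.one_lt_rpow_iff_of_pos (by norm_num)).mpr (Or.inl ⟨one_lt_two, hb⟩)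
  have hG0 : G 0 = 0 := by
    have h := hkey 2 (by norm_num) 0
    rw [mul_zero] at h
    have h2 : ((2:ℝ) ^ b - 1) * G 0 = 0 := by linear_combination -h
    rcases mul_eq_zero.mp h2 with h3 | h3
    · linarith
    · exact h3
  have hc₀ : 0 < G 1 := hG0 ▸ hG (show (0:ℝ) < 1 by norm_num)
  have hc₀' : 0 < -G (-1) := by
    have := hG (show (-1:ℝ) < 0 by norm_num)
    rw [hG0] at this; linarith
  refine ⟨G 1, hc₀, -G (-1), hc₀', fun x => ?_⟩
  rcases le_or_gt 0 x with hx | hx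
  · rw [if_pos hx]
    rcases hx.eq_or_lt with h | h
    · rw [← h, Real.zero_rpow (ne_of_gt hb), mul_zero, hG0]
    · have := hkey x h 1
      rw [mul_one] at this
      rw [this]; ring
  · rw [if_neg (not_le.mpr hx)]
    have := hkey (-x) (by linarith) (-1)
    rw [show (-x) * (-1) = x by ring] at this
    rw [this, abs_of_neg hx]; ring
end

section
/- Let α ∈ (0,1) and let G: ℝ → ℝ be a function. Define S(r,x) = (1 - α - 1{x > r})·G(r) + 1{x > r}·G(x). If S(c·r, c·x) = S(r,x) for all c > 0 and all r, x ∈ ℝ (i.e., S is positively homogeneous of degree 0), then G is constant on (0,∞); in particular G is not strictly increasing on (0,∞) and hence S is not strictly consistent for VaR_α. -/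
theorem var_score_no_zero_homogeneous
    (α : ℝ) (hα : α ∈ Set.Ioo (0:ℝ) 1)
    (G : ℝ → ℝ)
    (S : ℝ → ℝ → ℝ)
    (hS : ∀ r x, S r x = (1 - α - (if r < x then (1:ℝ) else 0)) * G r
        + (if r < x then (1:ℝ) else 0) * G x)
    (hhom : ∀ c > (0:ℝ), ∀ r x : ℝ, S (c * r) (c * x) = S r x) :
    (∀ x > (0:ℝ), ∀ y > (0:ℝ), G x = G y) ∧ ¬ StrictMonoOn G (Set.Ioi 0) := by
  have hconst : ∀ c > (0:ℝ), G c = G 1 := by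
    intro c hc
    have h := hhom c hc 1 1
    rw [hS, hS] at h
    simp only [lt_irrefl, if_neg (lt_irrefl _), mul_one] at h
    have hne : (1 - α) ≠ 0 := by have := hα.2; linarith
    have : (1 - α - 0) * G c + 0 * G c = (1 - α - 0) * G 1 + 0 * G 1 := h
    simp only [sub_zero, zero_mul, add_zero, mul_eq_mul_left_iff] at this
    rcases this with h | h
    · exact h
    · exact absurd h hne
  constructor
  · intro x hx y hy
    rw [hconst x hx, hconst y hy]
  · intro hmono
    have h12 := hmono (Set.mem_Ioi.mpr one_pos) (Set.mem_Ioi.mpr two_pos) one_lt_two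
    rw [hconst 1 one_pos, hconst 2 two_pos] at h12
    exact lt_irrefl _ h12
end

section
/- Let α ∈ (0,1) and let G: (0,∞) → ℝ be strictly increasing. Define S(r,x) = (1 - α - 1{x > r})·G(r) + 1{x > r}·G(x) for r, x > 0. If the score difference satisfies S(c·r, c·x) - S(c·r', c·x) = S(r,x) - S(r',x) for all r, r', c ∈ (0,∞) and x > 0, then there exist constants c₀ ∈ ℝ and c₁ > 0 such that G(r) = c₀ + c₁·log r for all r > 0. -/
/-- An additive strictly monotone function on ℝ is linear. -/
lemma additive_strictMono_linear (f : ℝ → ℝ) (hadd : ∀ x y, f (x + y) = f x + f y)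
    (hmono : StrictMono f) : ∀ t : ℝ, f t = f 1 * t := by
  let F : ℝ →+ ℝ := AddMonoidHom.mk' f (fun x y => hadd x y)
  have hq : ∀ (q : ℚ) (x : ℝ), f (q * x) = q * f x := by
    intro q x
    have := map_ratCast_smul F ℚ ℚ q x
    simpa [F, smul_eq_mul, Rat.smul_def] using this
  have hf1 : 0 < f 1 := by
    have h0 : f 0 = 0 := by
      have := hadd 0 0; simpa using this.symm
    have := hmono (show (0:ℝ) < 1 by norm_num)
    linarith
  intro t
  by_contra hne
  rcases lt_or_gt_of_ne hne with h | h
  · -- f t < f 1 * t, pick rational q with f t / f 1 < q < t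
    obtain ⟨q, hq1, hq2⟩ := exists_rat_btwn (show f t / f 1 < t by
      rw [div_lt_iff₀ hf1]; linarith [mul_comm (f 1) t])
    have : (q : ℝ) * f 1 ≤ f t := by
      have := hmono.monotone hq2.le
      have hqv : f (q : ℝ) = q * f 1 := by simpa using hq q 1
      linarith [hqv ▸ this]
    have : f t / f 1 < f t / f 1 := lt_of_lt_of_le hq1 (by
      rw [le_div_iff₀ hf1]; linarith [mul_comm (q:ℝ) (f 1)])
    exact absurd this (lt_irrefl _)
  · obtain ⟨q, hq1, hq2⟩ := exists_rat_btwn (show t < f t / f 1 by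
      rw [lt_div_iff₀ hf1]; linarith [mul_comm t (f 1)])
    have : f t ≤ (q : ℝ) * f 1 := by
      have := hmono.monotone hq1.le
      have hqv : f (q : ℝ) = q * f 1 := by simpa using hq q 1
      linarith [hqv ▸ this]
    have : f t / f 1 < f t / f 1 := lt_of_le_of_lt (by
      rw [div_le_iff₀ hf1]; linarith [mul_comm (q:ℝ) (f 1)]) hq2
    exact absurd this (lt_irrefl _)

theorem var_score_zero_homogeneous_differences_characterization
    (α : ℝ) (hα : α ∈ Set.Ioo (0:ℝ) 1)
    (G : ℝ → ℝ) (hG : StrictMonoOn G (Set.Ioi 0))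
    (S : ℝ → ℝ → ℝ)
    (hS : ∀ r > (0:ℝ), ∀ x > (0:ℝ), S r x = (1 - α - (if r < x then (1:ℝ) else 0)) * G r
        + (if r < x then (1:ℝ) else 0) * G x)
    (hhom : ∀ c > (0:ℝ), ∀ r > (0:ℝ), ∀ r' > (0:ℝ), ∀ x > (0:ℝ),
      S (c * r) (c * x) - S (c * r') (c * x) = S r x - S r' x) :
    ∃ c₀ : ℝ, ∃ c₁ > (0:ℝ), ∀ r > (0:ℝ), G r = c₀ + c₁ * Real.log r := by
  obtain ⟨hα0, hα1⟩ := hα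
  -- key: G(c*r) - G(c*r') = G r - G r'
  have key : ∀ c > (0:ℝ), ∀ r > (0:ℝ), ∀ r' > (0:ℝ),
      G (c * r) - G (c * r') = G r - G r' := by
    intro c hc r hr r' hr'
    set x : ℝ := min r (min r' 1) with hx
    have hx0 : 0 < x := by positivity
    have hxr : x ≤ r := min_le_left _ _
    have hxr' : x ≤ r' := le_trans (min_le_right _ _) (min_le_left _ _)
    have hcx0 : 0 < c * x := by positivity
    have hcxr : c * x ≤ c * r := by nlinarith
    have hcxr' : c * x ≤ c * r' := by nlinarith
    have e1 := hS r hr x hx0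
    have e2 := hS r' hr' x hx0
    have e3 := hS (c * r) (by positivity) (c * x) hcx0
    have e4 := hS (c * r') (by positivity) (c * x) hcx0
    rw [if_neg (not_lt.2 hxr)] at e1
    rw [if_neg (not_lt.2 hxr')] at e2
    rw [if_neg (not_lt.2 hcxr)] at e3
    rw [if_neg (not_lt.2 hcxr')] at e4
    have h := hhom c hc r hr r' hr' x hx0
    rw [e1, e2, e3, e4] at h
    have h1α : (1 : ℝ) - α ≠ 0 := by linarith
    field_simp at h
    nlinarith [h]
  set f : ℝ → ℝ := fun t => G (Real.exp t) - G 1 with hf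
  have hadd : ∀ s t, f (s + t) = f s + f t := by
    intro s t
    have h1 := key (Real.exp s) (Real.exp_pos s) (Real.exp t) (Real.exp_pos t) 1 one_pos
    rw [mul_one] at h1
    simp only [hf, Real.exp_add]
    linarith [h1]
  have hmono : StrictMono f := fun s t hst => by
    have := hG (Set.mem_Ioi.2 (Real.exp_pos s)) (Set.mem_Ioi.2 (Real.exp_pos t))
      (Real.exp_lt_exp.2 hst)
    simp only [hf]; linarith
  have hlin := additive_strictMono_linear f hadd hmono
  have hf1 : 0 < f 1 := by
    have h0 : f 0 = 0 := by have := hadd 0 0; simpa using this.symm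
    have := hmono (show (0:ℝ) < 1 by norm_num)
    linarith
  refine ⟨G 1, f 1, hf1, fun r hr => ?_⟩
  have := hlin (Real.log r)
  simp only [hf] at this
  rw [Real.exp_log hr] at this
  simp only [hf]
  linarith
end

section
/- Let φ: (0,∞) → ℝ be twice differentiable with φ'' > 0 (strictly convex), b ∈ ℝ, and suppose φ(c) - c·φ'(c) = c^b·(φ(1) - φ'(1)) for all c > 0. Then φ''(c) = -(φ(1) - φ'(1))·b·c^{b-2} for all c > 0; consequently, if b = 0 or φ(1) = φ'(1), then φ'' ≡ 0, contradicting strict convexity. -/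
theorem expectile_homogeneity_functional_equation
    (φ φ' φ'' : ℝ → ℝ)
    (hd1 : ∀ x > (0:ℝ), HasDerivAt φ (φ' x) x)
    (hd2 : ∀ x > (0:ℝ), HasDerivAt φ' (φ'' x) x)
    (hconv : ∀ x > (0:ℝ), 0 < φ'' x)
    (b : ℝ)
    (heq : ∀ c > (0:ℝ), φ c - c * φ' c = c ^ b * (φ 1 - φ' 1)) :
    (∀ c > (0:ℝ), φ'' c = -(φ 1 - φ' 1) * b * c ^ (b - 2)) ∧
      ((b = 0 ∨ φ 1 = φ' 1) → False) := by
  set A := φ 1 - φ' 1 with hA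
  have key : ∀ c > (0:ℝ), φ'' c = -A * b * c ^ (b - 2) := by
    intro c hc
    have hg : HasDerivAt (fun x => φ x - x * φ' x)
        (φ' c - (1 * φ' c + c * φ'' c)) c :=
      (hd1 c hc).sub ((hasDerivAt_id c).mul (hd2 c hc))
    have hh : HasDerivAt (fun x : ℝ => x ^ b * A) (b * c ^ (b - 1) * A) c := by
      simpa using (Real.hasDerivAt_rpow_const (p := b) (Or.inl hc.ne')).mul_const A
    have hev : (fun x : ℝ => x ^ b * A) =ᶠ[nhds c] fun x => φ x - x * φ' x := by
      filter_upwards [eventually_gt_nhds hc] with x hx using (heq x hx).symm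
    have huniq : φ' c - (1 * φ' c + c * φ'' c) = b * c ^ (b - 1) * A :=
      hg.unique (hh.congr_of_eventuallyEq hev.symm)
    have h1 : c * φ'' c = -(b * c ^ (b - 1) * A) := by linarith
    have hpow : c ^ (b - 2) = c ^ (b - 1) / c := by
      have : b - 2 = (b - 1) - 1 := by ring
      rw [this, Real.rpow_sub_one hc.ne']
    rw [hpow]
    field_simp
    linarith [h1]
  refine ⟨key, ?_⟩
  intro h
  have h1 := key 1 one_pos
  have h2 := hconv 1 one_pos
  rw [Real.one_rpow] at h1
  rcases h with hb | hA1
  · rw [hb] at h1; simp at h1; linarith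
  · have : A = 0 := by rw [hA, hA1]; ring
    rw [this] at h1; simp at h1; linarith
end

section
/- Let τ ∈ (0,1) and define S(r,x) = 1{x > r}·(1-2τ)·(log(x/r) + 1 - x/r) + (1-τ)·(log r - 1 + x/r) for r, x > 0. Then the score difference is positively homogeneous of degree 0: S(c·r, c·x) - S(c·r', c·x) = S(r,x) - S(r',x) for all r, r', x, c > 0. -/
theorem expectile_log_score_zero_homogeneous_differences
    (τ : ℝ) (hτ : τ ∈ Set.Ioo (0:ℝ) 1)
    (S : ℝ → ℝ → ℝ)
    (hS : ∀ r > (0:ℝ), ∀ x > (0:ℝ),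
      S r x = (if r < x then (1:ℝ) else 0) * (1 - 2*τ) * (Real.log (x / r) + 1 - x / r)
        + (1 - τ) * (Real.log r - 1 + x / r)) :
    ∀ c > (0:ℝ), ∀ r > (0:ℝ), ∀ r' > (0:ℝ), ∀ x > (0:ℝ),
      S (c * r) (c * x) - S (c * r') (c * x) = S r x - S r' x := by
  intro c hc r hr r' hr' x hx
  rw [hS (c*r) (by positivity) (c*x) (by positivity),
      hS (c*r') (by positivity) (c*x) (by positivity),
      hS r hr x hx, hS r' hr' x hx]
  simp only [mul_div_mul_left _ _ (ne_of_gt hc), mul_lt_mul_iff_right₀ hc,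
      Real.log_mul (ne_of_gt hc) (ne_of_gt hr), Real.log_mul (ne_of_gt hc) (ne_of_gt hr')]
  ring
end

section
/- Let ν ∈ (0,1) and define S(r₁, r₂, x) = 1{x > r₁}·(x - r₁)/r₂ + (1-ν)·(r₁/r₂ - 1 + log r₂) for r₁ ∈ ℝ, r₂ > 0, x ∈ ℝ. Then the score differences are positively homogeneous of degree 0: S(c·r₁, c·r₂, c·x) - S(c·r₁', c·r₂', c·x) = S(r₁, r₂, x) - S(r₁', r₂', x) for all c > 0, r₁, r₁' ∈ ℝ, r₂, r₂' > 0, x ∈ ℝ. -/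
theorem var_es_log_score_zero_homogeneous_differences
    (ν : ℝ) (hν : ν ∈ Set.Ioo (0:ℝ) 1)
    (S : ℝ → ℝ → ℝ → ℝ)
    (hS : ∀ (r₁ : ℝ), ∀ r₂ > (0:ℝ), ∀ x : ℝ,
      S r₁ r₂ x = (if r₁ < x then (1:ℝ) else 0) * (x - r₁) / r₂
        + (1 - ν) * (r₁ / r₂ - 1 + Real.log r₂)) :
    ∀ c > (0:ℝ), ∀ (r₁ r₁' : ℝ), ∀ r₂ > (0:ℝ), ∀ r₂' > (0:ℝ), ∀ x : ℝ,
      S (c * r₁) (c * r₂) (c * x) - S (c * r₁') (c * r₂') (c * x)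
        = S r₁ r₂ x - S r₁' r₂' x := by
  intro c hc r₁ r₁' r₂ hr₂ r₂' hr₂' x
  rw [hS _ _ hr₂ x, hS _ _ hr₂' x, hS _ _ (mul_pos hc hr₂) (c*x),
    hS _ _ (mul_pos hc hr₂') (c*x)]
  have h1 : c * r₁ < c * x ↔ r₁ < x := mul_lt_mul_iff_right₀ hc
  have h2 : c * r₁' < c * x ↔ r₁' < x := mul_lt_mul_iff_right₀ hc
  rw [Real.log_mul (ne_of_gt hc) (ne_of_gt hr₂),
    Real.log_mul (ne_of_gt hc) (ne_of_gt hr₂')]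
  simp only [h1, h2]
  have hc' := hc.ne'
  have h2' := hr₂.ne'
  have h2'' := hr₂'.ne'
  by_cases hA : r₁ < x <;> by_cases hB : r₁' < x <;> simp [hA, hB] <;> field_simp <;> ring
end

section
/- Let X be an integrable, non-constant real random variable and define G_X(z) = E[(z - X)·1{X ≤ z}] / E[|z - X|]. Then G_X is non-decreasing on ℝ, lim_{z→-∞} G_X(z) = 0, lim_{z→+∞} G_X(z) = 1, and for τ ∈ (0,1), z is the τ-expectile of X if and only if G_X is continuous at z with G_X(z) = τ (equivalently, e_τ(X) is the generalized inverse of G_X at τ). -/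
open MeasureTheory Filter

theorem inverse_expectile_function_properties
    {Ω : Type*} [MeasurableSpace Ω] (μ : Measure Ω) [IsProbabilityMeasure μ]
    (X : Ω → ℝ) (hX : Measurable X) (hInt : Integrable X μ)
    (hNC : ¬ ∃ c : ℝ, ∀ᵐ ω ∂μ, X ω = c)
    (G : ℝ → ℝ)
    (hG : ∀ z, G z = (∫ ω, (z - X ω) * (if X ω ≤ z then (1:ℝ) else 0) ∂μ)
        / (∫ ω, |z - X ω| ∂μ)) :
    Monotone G
    ∧ Tendsto G atBot (nhds 0)
    ∧ Tendsto G atTop (nhds 1)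
    ∧ ∀ τ ∈ Set.Ioo (0:ℝ) 1, ∀ z : ℝ,
        (τ * ∫ ω, (X ω - z) * (if z < X ω then (1:ℝ) else 0) ∂μ
          = (1 - τ) * ∫ ω, (z - X ω) * (if X ω ≤ z then (1:ℝ) else 0) ∂μ)
        ↔ (ContinuousAt G z ∧ G z = τ) := by
  set n : ℝ → ℝ := fun z => ∫ ω, (z - X ω) * (if X ω ≤ z then (1:ℝ) else 0) ∂μ with hn
  set p : ℝ → ℝ := fun z => ∫ ω, (X ω - z) * (if z < X ω then (1:ℝ) else 0) ∂μ with hp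
  set d : ℝ → ℝ := fun z => ∫ ω, |z - X ω| ∂μ with hd
  have hG' : ∀ z, G z = n z / d z := hG
  -- pointwise identities
  have hne : ∀ z ω, (z - X ω) * (if X ω ≤ z then (1:ℝ) else 0) = max (z - X ω) 0 := by
    intro z ω; split_ifs with h
    · rw [mul_one, max_eq_left (by linarith)]
    · rw [mul_zero, max_eq_right (by push_neg at h; linarith)]
  have hpe : ∀ z ω, (X ω - z) * (if z < X ω then (1:ℝ) else 0) = max (X ω - z) 0 := by
    intro z ω; split_ifs with h
    · rw [mul_one, max_eq_left (by linarith)]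
    · rw [mul_zero, max_eq_right (by push_neg at h; linarith)]
  -- integrability
  have hIntn : ∀ z, Integrable (fun ω => max (z - X ω) 0) μ := fun z =>
    ((integrable_const z).sub hInt).pos_part
  have hIntp : ∀ z, Integrable (fun ω => max (X ω - z) 0) μ := fun z =>
    (hInt.sub (integrable_const z)).pos_part
  have hIntd : ∀ z, Integrable (fun ω => |z - X ω|) μ := fun z =>
    ((integrable_const z).sub hInt).abs
  -- rewritten forms
  have hneq : ∀ z, n z = ∫ ω, max (z - X ω) 0 ∂μ := fun z => by
    rw [hn]; exact integral_congr_ae (Filter.Eventually.of_forall fun ω => hne z ω)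
  have hpeq : ∀ z, p z = ∫ ω, max (X ω - z) 0 ∂μ := fun z => by
    rw [hp]; exact integral_congr_ae (Filter.Eventually.of_forall fun ω => hpe z ω)
  -- d = n + p
  have hdsum : ∀ z, d z = n z + p z := by
    intro z
    rw [hneq, hpeq, hd, ← integral_add (hIntn z) (hIntp z)]
    refine integral_congr_ae (Filter.Eventually.of_forall fun ω => ?_)
    dsimp only
    rcases le_total (X ω) z with h | h
    · rw [abs_of_nonneg (by linarith), max_eq_left (by linarith),
        max_eq_right (by linarith)]; ring
    · rw [abs_of_nonpos (by linarith), max_eq_right (by linarith),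
        max_eq_left (by linarith)]; ring
  -- nonnegativity
  have hnnon : ∀ z, 0 ≤ n z := fun z => by
    rw [hneq]; exact integral_nonneg fun ω => le_max_right _ _
  have hpnon : ∀ z, 0 ≤ p z := fun z => by
    rw [hpeq]; exact integral_nonneg fun ω => le_max_right _ _
  -- d positive
  have hdpos : ∀ z, 0 < d z := by
    intro z
    rcases (integral_nonneg fun ω => abs_nonneg (z - X ω) : (0:ℝ) ≤ d z).lt_or_eq
      with h | h
    · exact h
    · exfalso; apply hNC
      have h0 := (integral_eq_zero_iff_of_nonneg
        (fun ω => abs_nonneg (z - X ω)) (hIntd z)).mp h.symm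
      refine ⟨z, h0.mono fun ω hω => ?_⟩
      have : |z - X ω| = 0 := hω
      have := abs_eq_zero.mp this
      linarith [sub_eq_zero.mp this]
  -- monotone / antitone
  have hnmono : Monotone n := by
    intro a b hab
    rw [hneq a, hneq b]
    exact integral_mono (hIntn a) (hIntn b)
      (fun ω => max_le_max (by linarith) le_rfl)
  have hpanti : Antitone p := by
    intro a b hab
    rw [hpeq a, hpeq b]
    exact integral_mono (hIntp b) (hIntp a)
      (fun ω => max_le_max (by linarith) le_rfl)
  -- Lipschitz bounds for continuity
  have hlip : ∀ (f : ℝ → Ω → ℝ), (∀ z, Integrable (f z) μ) →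
      (∀ a b ω, |f a ω - f b ω| ≤ |a - b|) →
      Continuous (fun z => ∫ ω, f z ω ∂μ) := by
    intro f hfi hfl
    have : LipschitzWith 1 (fun z => ∫ ω, f z ω ∂μ) := by
      apply LipschitzWith.of_dist_le_mul
      intro a b
      rw [Real.dist_eq, Real.dist_eq, ← integral_sub (hfi a) (hfi b),
        NNReal.coe_one, one_mul]
      calc |∫ ω, (f a ω - f b ω) ∂μ| ≤ ∫ ω, |f a ω - f b ω| ∂μ := by
            simpa [Real.norm_eq_abs] using
              norm_integral_le_integral_norm (fun ω => f a ω - f b ω) (μ := μ)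
        _ ≤ ∫ _ω, |a - b| ∂μ := integral_mono ((hfi a).sub (hfi b)).abs
            (integrable_const _) (fun ω => hfl a b ω)
        _ = |a - b| := by simp [measure_univ]
    simpa using this.continuous
  have hcontn : Continuous n := by
    have := hlip (fun z ω => max (z - X ω) 0) hIntn (fun a b ω => by
      calc |max (a - X ω) 0 - max (b - X ω) 0| ≤ |(a - X ω) - (b - X ω)| :=
            abs_max_sub_max_le_abs _ _ _
        _ = |a - b| := by ring_nf)
    refine Continuous.congr this fun z => (hneq z).symm
  have hcontp : Continuous p := by
    have := hlip (fun z ω => max (X ω - z) 0) hIntp (fun a b ω => by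
      calc |max (X ω - a) 0 - max (X ω - b) 0| ≤ |(X ω - a) - (X ω - b)| :=
            abs_max_sub_max_le_abs _ _ _
        _ = |a - b| := by rw [abs_sub_comm]; ring_nf)
    refine Continuous.congr this fun z => (hpeq z).symm
  have hcontd : Continuous d := by
    refine Continuous.congr (hcontn.add hcontp) fun z => (hdsum z).symm
  have hGfun : G = fun z => n z / d z := funext hG'
  have hcontG : Continuous G := by
    rw [hGfun]; exact hcontn.div hcontd fun z => (hdpos z).ne'
  -- mean
  set m : ℝ := ∫ ω, X ω ∂μ with hm
  have hdlow1 : ∀ z, m - z ≤ d z := by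
    intro z
    have : (∫ ω, (X ω - z) ∂μ) ≤ d z := by
      rw [hd]
      exact integral_mono (hInt.sub (integrable_const z)) (hIntd z)
        (fun ω => by rw [abs_sub_comm]; exact le_abs_self _)
    rwa [integral_sub hInt (integrable_const z), integral_const,
      probReal_univ, one_smul] at this
  have hdlow2 : ∀ z, z - m ≤ d z := by
    intro z
    have : (∫ ω, (z - X ω) ∂μ) ≤ d z := by
      rw [hd]
      exact integral_mono ((integrable_const z).sub hInt) (hIntd z)
        (fun ω => le_abs_self _)
    rwa [integral_sub (integrable_const z) hInt, integral_const,
      probReal_univ, one_smul] at this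
  have hGnonneg : ∀ z, 0 ≤ G z := fun z => by
    rw [hG']; exact div_nonneg (hnnon z) (hdpos z).le
  refine ⟨?_, ?_, ?_, ?_⟩
  · -- Monotone
    intro a b hab
    rw [hG' a, hG' b, div_le_div_iff₀ (hdpos a) (hdpos b), hdsum a, hdsum b]
    nlinarith [mul_le_mul (hnmono hab) (hpanti hab) (hpnon b) (hnnon b)]
  · -- atBot
    have hupper : Tendsto (fun z => n 0 / (m - z)) atBot (nhds 0) := by
      apply Tendsto.div_atTop (tendsto_const_nhds)
      have : Tendsto (fun z : ℝ => m + -z) atBot atTop :=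
        tendsto_atTop_add_const_left atBot m tendsto_neg_atBot_atTop
      exact this.congr (fun z => (sub_eq_add_neg m z).symm)
    refine tendsto_of_tendsto_of_tendsto_of_le_of_le' tendsto_const_nhds hupper
      (Filter.Eventually.of_forall hGnonneg) ?_
    filter_upwards [eventually_le_atBot (0:ℝ), eventually_lt_atBot m] with z hz0 hzm
    rw [hG']
    exact div_le_div₀ (hnnon 0) (hnmono hz0) (by linarith) (hdlow1 z)
  · -- atTop
    have hGalt : ∀ z, G z = 1 - p z / d z := by
      intro z
      have hnz : n z = d z - p z := by linarith [hdsum z]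
      rw [hG' z, hnz, sub_div, div_self (hdpos z).ne']
    have hpd : Tendsto (fun z => p z / d z) atTop (nhds 0) := by
      have hupper : Tendsto (fun z => p 0 / (z - m)) atTop (nhds 0) := by
        apply Tendsto.div_atTop (tendsto_const_nhds)
        exact tendsto_atTop_add_const_right atTop (-m) tendsto_id
      refine tendsto_of_tendsto_of_tendsto_of_le_of_le' tendsto_const_nhds hupper
        (Filter.Eventually.of_forall fun z => div_nonneg (hpnon z) (hdpos z).le) ?_
      filter_upwards [eventually_ge_atTop (0:ℝ), eventually_gt_atTop m] with z hz0 hzm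
      exact div_le_div₀ (hpnon 0) (hpanti hz0) (by linarith) (hdlow2 z)
    have : Tendsto (fun z => 1 - p z / d z) atTop (nhds 1) := by
      have := (tendsto_const_nhds (x := (1:ℝ)) (f := atTop)).sub hpd
      simpa using this
    exact Tendsto.congr (fun z => (hGalt z).symm) this
  · -- expectile characterization
    intro τ hτ z
    have hiff : (τ * p z = (1 - τ) * n z) ↔
        (τ * ∫ ω, (X ω - z) * (if z < X ω then (1:ℝ) else 0) ∂μ
          = (1 - τ) * ∫ ω, (z - X ω) * (if X ω ≤ z then (1:ℝ) else 0) ∂μ) := Iff.rfl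
    rw [← hiff]
    constructor
    · intro h
      have hnd : n z = τ * d z := by linear_combination -h - τ * hdsum z
      refine ⟨hcontG.continuousAt, ?_⟩
      rw [hG', hnd, mul_div_assoc, div_self (hdpos z).ne', mul_one]
    · rintro ⟨-, hGz⟩
      rw [hG'] at hGz
      have hnd : n z = τ * d z := by
        rw [div_eq_iff (hdpos z).ne'] at hGz; linarith [hGz]
      linear_combination -hnd - τ * hdsum z
end
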